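/- Annealed importance sampling path-reversal identity: let S be a finite type, L ≥ 1, let p_0, p_1, …, p_L : S → ℝ be functions that are strictly positive everywhere, and let T_1, …, T_{L−1} : S × S → ℝ satisfy detailed balance p_l(s) T_l(s,t) = p_l(t) T_l(t,s) for all s, t ∈ S and 1 ≤ l ≤ L−1. Then for every path x_1, …, x_L ∈ S, p_0(x_1) · (Π_{l=1}^{L−1} T_l(x_l, x_{l+1})) · (Π_{l=1}^{L} p_l(x_l)/p_{l−1}(x_l)) = p_L(x_L) · Π_{l=1}^{L−1} T_l(x_{l+1}, x_l). -/

import Mathlib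

/-- Annealed importance sampling path-reversal identity. Let `S` be a finite
type, `L ≥ 1`, `p 0, …, p L : S → ℝ` strictly positive, and let the kernels
`T 1, …, T (L-1)` satisfy detailed balance `p l s * T l s t = p l t * T l t s`. Then for
every path `x 1, …, x L` in `S`, the forward path probability times the importance weight
`Π_{l=1}^{L} p l (x l) / p (l-1) (x l)` equals the backward path probability
`p L (x L) · Π_{l=1}^{L-1} T l (x (l+1)) (x l)`. -/
theorem ais_path_reversal (S : Type*) [Fintype S] (L : ℕ) (hL : 1 ≤ L)
    (p : ℕ → S → ℝ) (hp : ∀ l ≤ L, ∀ s : S, 0 < p l s)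
    (T : ℕ → S → S → ℝ)
    (hdb : ∀ l, 1 ≤ l → l ≤ L - 1 → ∀ s t : S, p l s * T l s t = p l t * T l t s)
    (x : ℕ → S) :
    p 0 (x 1) * (∏ l ∈ Finset.Icc 1 (L - 1), T l (x l) (x (l + 1))) *
      (∏ l ∈ Finset.Icc 1 L, p l (x l) / p (l - 1) (x l))
    = p L (x L) * ∏ l ∈ Finset.Icc 1 (L - 1), T l (x (l + 1)) (x l) := by
  induction L, hL using Nat.le_induction with
  | base =>
      have h0 := (hp 0 (by norm_num) (x 1)).ne'
      simp only [show (1:ℕ) - 1 = 0 from rfl, show Finset.Icc 1 0 = (∅ : Finset ℕ) from rfl,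
        Finset.prod_empty, Finset.Icc_self, Finset.prod_singleton, mul_one]
      field_simp
  | succ L hL ih =>
      obtain ⟨M, rfl⟩ : ∃ M, L = M + 1 := ⟨L - 1, (Nat.succ_pred_eq_of_pos hL).symm⟩
      have hp' : ∀ l ≤ M + 1, ∀ s : S, 0 < p l s := fun l hl s => hp l (by omega) s
      have hdb' : ∀ l, 1 ≤ l → l ≤ M + 1 - 1 → ∀ s t : S, p l s * T l s t = p l t * T l t s :=
        fun l h1 h2 s t => hdb l h1 (by omega) s t
      have key := ih hp' hdb'
      simp only [Nat.add_sub_cancel] at key ⊢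
      have hT1 : ∏ l ∈ Finset.Icc 1 (M + 1), T l (x l) (x (l + 1)) =
          (∏ l ∈ Finset.Icc 1 M, T l (x l) (x (l + 1))) * T (M + 1) (x (M + 1)) (x (M + 1 + 1)) :=
        Finset.prod_Icc_succ_top (by omega) _
      have hT2 : ∏ l ∈ Finset.Icc 1 (M + 1), T l (x (l + 1)) (x l) =
          (∏ l ∈ Finset.Icc 1 M, T l (x (l + 1)) (x l)) * T (M + 1) (x (M + 1 + 1)) (x (M + 1)) :=
        Finset.prod_Icc_succ_top (by omega) _
      have hW : ∏ l ∈ Finset.Icc 1 (M + 1 + 1), p l (x l) / p (l - 1) (x l) =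
          (∏ l ∈ Finset.Icc 1 (M + 1), p l (x l) / p (l - 1) (x l)) *
            (p (M + 1 + 1) (x (M + 1 + 1)) / p (M + 1 + 1 - 1) (x (M + 1 + 1))) :=
        Finset.prod_Icc_succ_top (by omega) _
      rw [hT1, hT2, hW]
      simp only [Nat.add_sub_cancel]
      have hdbL := hdb (M + 1) (by omega) (by omega) (x (M + 1)) (x (M + 1 + 1))
      have hne : p (M + 1) (x (M + 1 + 1)) ≠ 0 := (hp (M + 1) (by omega) _).ne'
      calc p 0 (x 1) * ((∏ l ∈ Finset.Icc 1 M, T l (x l) (x (l + 1))) * T (M + 1) (x (M + 1)) (x (M + 1 + 1))) *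
            ((∏ l ∈ Finset.Icc 1 (M + 1), p l (x l) / p (l - 1) (x l)) * (p (M + 1 + 1) (x (M + 1 + 1)) / p (M + 1) (x (M + 1 + 1))))
          = (p 0 (x 1) * (∏ l ∈ Finset.Icc 1 M, T l (x l) (x (l + 1))) * (∏ l ∈ Finset.Icc 1 (M + 1), p l (x l) / p (l - 1) (x l))) *
            (T (M + 1) (x (M + 1)) (x (M + 1 + 1)) * (p (M + 1 + 1) (x (M + 1 + 1)) / p (M + 1) (x (M + 1 + 1)))) := by ring
        _ = (p (M + 1) (x (M + 1)) * ∏ l ∈ Finset.Icc 1 M, T l (x (l + 1)) (x l)) *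
            (T (M + 1) (x (M + 1)) (x (M + 1 + 1)) * (p (M + 1 + 1) (x (M + 1 + 1)) / p (M + 1) (x (M + 1 + 1)))) := by rw [key]
        _ = (p (M + 1) (x (M + 1)) * T (M + 1) (x (M + 1)) (x (M + 1 + 1))) / p (M + 1) (x (M + 1 + 1)) *
            p (M + 1 + 1) (x (M + 1 + 1)) * ∏ l ∈ Finset.Icc 1 M, T l (x (l + 1)) (x l) := by ring
        _ = (p (M + 1) (x (M + 1 + 1)) * T (M + 1) (x (M + 1 + 1)) (x (M + 1))) / p (M + 1) (x (M + 1 + 1)) *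
            p (M + 1 + 1) (x (M + 1 + 1)) * ∏ l ∈ Finset.Icc 1 M, T l (x (l + 1)) (x l) := by rw [hdbL]
        _ = p (M + 1 + 1) (x (M + 1 + 1)) * ((∏ l ∈ Finset.Icc 1 M, T l (x (l + 1)) (x l)) * T (M + 1) (x (M + 1 + 1)) (x (M + 1))) := by
            field_simp
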